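/- Fix a compact convex set P ⊆ ℝ², S ∈ interior(P), and a direction vector v ≠ 0. For t ∈ ℝ, let q_t be the line through S + t·n (n a unit normal to v) with direction v, and let c(t) be the correcting factor of P with respect to q_t. Then c is a continuous, piecewise linear function of t, with c(0) = 0, c(t) = t/a for t ≥ 0 and c(t) = -t/b for t ≤ 0, where a = sup{⟨X - S, n⟩ : X ∈ P} and b = sup{⟨S - X, n⟩ : X ∈ P}; in particular c is V-shaped (convex, vanishing only at t = 0). -/

import Mathlib

def homothetyImage (S : EuclideanSpace ℝ (Fin 2)) (c : ℝ)
    (P : Set (EuclideanSpace ℝ (Fin 2))) : Set (EuclideanSpace ℝ (Fin 2)) :=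
  (fun X => S + c • (X - S)) '' P

def IsSupportLine (L K : Set (EuclideanSpace ℝ (Fin 2))) : Prop :=
  (L ∩ K).Nonempty ∧
  ∃ (f : EuclideanSpace ℝ (Fin 2) →L[ℝ] ℝ) (a : ℝ), f ≠ 0 ∧ L = {x | f x = a} ∧
    ((∀ x ∈ K, f x ≤ a) ∨ (∀ x ∈ K, a ≤ f x))

open scoped RealInnerProductSpace

-- proportionality of functionals with equal level sets
lemma prop_lemma (f : EuclideanSpace ℝ (Fin 2) →L[ℝ] ℝ) (w : EuclideanSpace ℝ (Fin 2))
    (a' b' : ℝ) (hf : f ≠ 0)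
    (hset : {x : EuclideanSpace ℝ (Fin 2) | f x = a'} =
      {x : EuclideanSpace ℝ (Fin 2) | (inner ℝ w x : ℝ) = b'})
    (x₀ : EuclideanSpace ℝ (Fin 2)) (hx₀ : (inner ℝ w x₀ : ℝ) = b') :
    ∃ l : ℝ, l ≠ 0 ∧ (∀ x, f x = l * (inner ℝ w x : ℝ)) ∧ a' = l * b' := by
  have hfx₀ : f x₀ = a' := by
    have : x₀ ∈ {x : EuclideanSpace ℝ (Fin 2) | (inner ℝ w x : ℝ) = b'} := hx₀
    rw [← hset] at this; exact this
  have hker : ∀ y : EuclideanSpace ℝ (Fin 2), (inner ℝ w y : ℝ) = 0 → f y = 0 := by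
    intro y hy
    have h1 : (inner ℝ w (x₀ + y) : ℝ) = b' := by rw [inner_add_right, hy, hx₀, add_zero]
    have : x₀ + y ∈ {x : EuclideanSpace ℝ (Fin 2) | f x = a'} := by rw [hset]; exact h1
    have h2 : f (x₀ + y) = a' := this
    rw [map_add, hfx₀] at h2; linarith
  obtain ⟨u, hu⟩ : ∃ u, f u ≠ 0 := by
    by_contra h; push_neg at h
    exact hf (ContinuousLinearMap.ext fun x => by simp [h x])
  have hwu : (inner ℝ w u : ℝ) ≠ 0 := fun h => hu (hker u h)
  have hgen : ∀ y : EuclideanSpace ℝ (Fin 2), f y = f u / (inner ℝ w u : ℝ) * (inner ℝ w y : ℝ) := by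
    intro y
    have hz : (inner ℝ w (y - ((inner ℝ w y : ℝ) / (inner ℝ w u : ℝ)) • u) : ℝ) = 0 := by
      rw [inner_sub_right, inner_smul_right, div_mul_cancel₀ _ hwu, sub_self]
    have h2 := hker _ hz
    rw [map_sub, map_smul, smul_eq_mul, sub_eq_zero] at h2
    rw [h2]; ring
  exact ⟨f u / (inner ℝ w u : ℝ), div_ne_zero hu hwu, hgen, by rw [← hfx₀, hgen, hx₀]⟩

theorem correcting_factor_V_shaped
    (P : Set (EuclideanSpace ℝ (Fin 2))) (S : EuclideanSpace ℝ (Fin 2))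
    (hcpt : IsCompact P) (hconv : Convex ℝ P) (hS : S ∈ interior P)
    (v n : EuclideanSpace ℝ (Fin 2)) (hv : v ≠ 0) (hn : ‖n‖ = 1)
    (horth : (inner ℝ v n : ℝ) = 0)
    -- the family of lines through `S + t • n` with direction `v`:
    (q : ℝ → Set (EuclideanSpace ℝ (Fin 2)))
    (hq : ∀ t : ℝ, q t = {x | ∃ s : ℝ, x = S + t • n + s • v})
    -- `c t` is the correcting factor of `P` with respect to `q t`:
    (c : ℝ → ℝ)
    (hc : ∀ t : ℝ, 0 ≤ c t ∧ IsSupportLine (q t) (homothetyImage S (c t) P)) :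
    Continuous c ∧ c 0 = 0 ∧
    (∀ t : ℝ, 0 ≤ t → c t = t / sSup ((fun X => (inner ℝ (X - S) n : ℝ)) '' P)) ∧
    (∀ t : ℝ, t ≤ 0 → c t = -t / sSup ((fun X => (inner ℝ (S - X) n : ℝ)) '' P)) ∧
    ConvexOn ℝ Set.univ c ∧ (∀ t : ℝ, c t = 0 ↔ t = 0) := by
  classical
  have hn0 : n ≠ 0 := by intro h; rw [h] at hn; simp at hn
  have hnn : (inner ℝ n n : ℝ) = 1 := by
    rw [real_inner_self_eq_norm_sq, hn]; norm_num
  have hnv : (inner ℝ n v : ℝ) = 0 := by rw [real_inner_comm]; exact horth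
  -- characterize q t as a level set of ⟪n, ·⟫
  have hspan : Submodule.span ℝ {v} = (Submodule.span ℝ {n})ᗮ := by
    apply Submodule.eq_of_le_of_finrank_eq
    · rw [Submodule.span_singleton_le_iff_mem,
        Submodule.mem_orthogonal_singleton_iff_inner_right]
      exact hnv
    · rw [finrank_span_singleton hv]
      have h1 : Module.finrank ℝ (Submodule.span ℝ {n}) +
          Module.finrank ℝ (Submodule.span ℝ {n})ᗮ =
          Module.finrank ℝ (EuclideanSpace ℝ (Fin 2)) :=
        (Submodule.span ℝ {n}).finrank_add_finrank_orthogonal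
      rw [finrank_span_singleton hn0, finrank_euclideanSpace_fin] at h1
      omega
  have hq' : ∀ t : ℝ, q t = {x : EuclideanSpace ℝ (Fin 2) |
      (inner ℝ n x : ℝ) = inner ℝ n S + t} := by
    intro t
    rw [hq t]
    ext x
    constructor
    · rintro ⟨s, rfl⟩
      show (inner ℝ n (S + t • n + s • v) : ℝ) = _
      rw [inner_add_right, inner_add_right, inner_smul_right, inner_smul_right, hnn, hnv]
      ring
    · intro hx
      have hx' : (inner ℝ n x : ℝ) = inner ℝ n S + t := hx
      have hy : (inner ℝ n (x - S - t • n) : ℝ) = 0 := by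
        rw [inner_sub_right, inner_sub_right, inner_smul_right, hnn, hx']
        ring
      have hm : x - S - t • n ∈ Submodule.span ℝ {v} := by
        rw [hspan, Submodule.mem_orthogonal_singleton_iff_inner_right]
        exact hy
      obtain ⟨s, hs⟩ := Submodule.mem_span_singleton.mp hm
      exact ⟨s, by rw [hs]; abel⟩
  -- extrema of ⟪·-S, n⟫ on P
  have hPne : P.Nonempty := ⟨S, interior_subset hS⟩
  have hcont : Continuous fun X : EuclideanSpace ℝ (Fin 2) => (inner ℝ n (X - S) : ℝ) :=
    continuous_const.inner (continuous_id.sub continuous_const)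
  obtain ⟨Xa, hXaP, hXa⟩ := hcpt.exists_isMaxOn hPne hcont.continuousOn
  obtain ⟨Xb, hXbP, hXb⟩ := hcpt.exists_isMinOn hPne hcont.continuousOn
  set a : ℝ := (inner ℝ n (Xa - S) : ℝ) with ha_def
  set b : ℝ := -(inner ℝ n (Xb - S) : ℝ) with hb_def
  have hXa' : ∀ X ∈ P, (inner ℝ n (X - S) : ℝ) ≤ a := fun X hX => hXa hX
  have hXbmin : ∀ X ∈ P, (inner ℝ n (Xb - S) : ℝ) ≤ (inner ℝ n (X - S) : ℝ) :=
    fun X hX => hXb hX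
  have hXb' : ∀ X ∈ P, -b ≤ (inner ℝ n (X - S) : ℝ) := by
    intro X hX
    have := hXbmin X hX
    rw [hb_def, neg_neg]
    exact this
  -- identify the sSup's
  have hsupa : sSup ((fun X => (inner ℝ (X - S) n : ℝ)) '' P) = a := by
    apply IsGreatest.csSup_eq
    constructor
    · refine ⟨Xa, hXaP, ?_⟩
      show (inner ℝ (Xa - S) n : ℝ) = a
      rw [real_inner_comm]
    · rintro y ⟨X, hX, rfl⟩
      show (inner ℝ (X - S) n : ℝ) ≤ a
      rw [real_inner_comm]; exact hXa' X hX
  have hsupb : sSup ((fun X => (inner ℝ (S - X) n : ℝ)) '' P) = b := by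
    apply IsGreatest.csSup_eq
    constructor
    · refine ⟨Xb, hXbP, ?_⟩
      show (inner ℝ (S - Xb) n : ℝ) = b
      rw [real_inner_comm, show S - Xb = -(Xb - S) from by abel, inner_neg_right, hb_def]
    · rintro y ⟨X, hX, rfl⟩
      show (inner ℝ (S - X) n : ℝ) ≤ b
      rw [real_inner_comm, show S - X = -(X - S) from by abel, inner_neg_right]
      have := hXb' X hX; linarith
  -- positivity of a and b
  obtain ⟨ε, hε, hball⟩ := Metric.mem_nhds_iff.mp (mem_interior_iff_mem_nhds.mp hS)
  have hmem : ∀ r : ℝ, |r| < ε → S + r • n ∈ P := by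
    intro r hr
    apply hball
    rw [Metric.mem_ball, dist_eq_norm]
    simp only [add_sub_cancel_left, norm_smul, hn, mul_one, Real.norm_eq_abs]
    exact hr
  have ha_pos : 0 < a := by
    have h1 : S + (ε/2) • n ∈ P := hmem _ (by rw [abs_of_pos (by linarith)]; linarith)
    have h2 := hXa' _ h1
    rw [add_sub_cancel_left, inner_smul_right, hnn, mul_one] at h2
    linarith
  have hb_pos : 0 < b := by
    have h1 : S + (-(ε/2)) • n ∈ P := hmem _ (by rw [abs_of_neg (by linarith)]; linarith)
    have h2 := hXb' _ h1
    rw [add_sub_cancel_left, inner_smul_right, hnn, mul_one] at h2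
    linarith
  -- key disjunction
  have key : ∀ t : ℝ, c t * a = t ∨ c t * b = -t := by
    intro t
    obtain ⟨hct0, ⟨x₀, hx₀q, hx₀K⟩, f, a', hf0, hL, hside⟩ := hc t
    obtain ⟨X₀, hX₀P, hX₀⟩ := hx₀K
    have hx₀t : c t * (inner ℝ n (X₀ - S) : ℝ) = t := by
      have hx' : (inner ℝ n x₀ : ℝ) = inner ℝ n S + t := by
        have := hx₀q; rw [hq' t] at this; exact this
      rw [← hX₀, inner_add_right, inner_smul_right] at hx'
      linarith
    obtain ⟨l, hl0, hlf, hla⟩ := prop_lemma f n a' ((inner ℝ n S : ℝ) + t) hf0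
      (by rw [← hL, ← hq' t])
      (S + t • n) (by rw [inner_add_right, inner_smul_right, hnn]; ring)
    have hK : ∀ X ∈ P, f (S + c t • (X - S)) =
        l * ((inner ℝ n S : ℝ) + c t * (inner ℝ n (X - S) : ℝ)) := by
      intro X hX
      rw [hlf, inner_add_right, inner_smul_right]
    have hside' : (∀ X ∈ P, c t * (inner ℝ n (X - S) : ℝ) ≤ t) ∨
        (∀ X ∈ P, t ≤ c t * (inner ℝ n (X - S) : ℝ)) := by
      rcases hside with h | h
      · rcases lt_or_gt_of_ne hl0 with hl | hl
        · right; intro X hX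
          have h2 := h _ ⟨X, hX, rfl⟩
          rw [hK X hX, hla] at h2
          nlinarith
        · left; intro X hX
          have h2 := h _ ⟨X, hX, rfl⟩
          rw [hK X hX, hla] at h2
          nlinarith
      · rcases lt_or_gt_of_ne hl0 with hl | hl
        · left; intro X hX
          have h2 := h _ ⟨X, hX, rfl⟩
          rw [hK X hX, hla] at h2
          nlinarith
        · right; intro X hX
          have h2 := h _ ⟨X, hX, rfl⟩
          rw [hK X hX, hla] at h2
          nlinarith
    rcases hside' with h | h
    · left
      have h1 : c t * a ≤ t := h Xa hXaP
      have h2 : c t * (inner ℝ n (X₀ - S) : ℝ) ≤ c t * a :=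
        mul_le_mul_of_nonneg_left (hXa' X₀ hX₀P) hct0
      linarith
    · right
      have h1 : t ≤ c t * (-b) := by
        have := h Xb hXbP
        have hbb : (inner ℝ n (Xb - S) : ℝ) = -b := by rw [hb_def, neg_neg]
        rw [hbb] at this; exact this
      have h2 : c t * (-b) ≤ c t * (inner ℝ n (X₀ - S) : ℝ) :=
        mul_le_mul_of_nonneg_left (hXb' X₀ hX₀P) hct0
      linarith
  -- derive the formula
  have hc0' : ∀ t, 0 ≤ c t := fun t => (hc t).1
  have hpos : ∀ t : ℝ, 0 ≤ t → c t = t / a := by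
    intro t ht
    rcases key t with h | h
    · rw [eq_div_iff ha_pos.ne']; exact h
    · have hct : c t = 0 := by nlinarith [hc0' t]
      rw [hct] at h ⊢
      rw [show t = 0 from by linarith]
      simp
  have hneg : ∀ t : ℝ, t ≤ 0 → c t = -t / b := by
    intro t ht
    rcases key t with h | h
    · have hct : c t = 0 := by nlinarith [hc0' t]
      rw [hct] at h ⊢
      rw [show t = 0 from by linarith]
      simp
    · rw [eq_div_iff hb_pos.ne']; linarith
  have hcmax : c = fun t => max (t / a) (-t / b) := by
    funext t
    rcases le_total 0 t with ht | ht
    · rw [hpos t ht, max_eq_left]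
      exact le_trans (div_nonpos_of_nonpos_of_nonneg (by linarith) hb_pos.le)
        (div_nonneg ht ha_pos.le)
    · rw [hneg t ht, max_eq_right]
      exact le_trans (div_nonpos_of_nonpos_of_nonneg ht ha_pos.le)
        (div_nonneg (by linarith) hb_pos.le)
  have hc00 : c 0 = 0 := by rw [hpos 0 le_rfl]; simp
  refine ⟨?_, hc00, ?_, ?_, ?_, ?_⟩
  · rw [hcmax]
    exact (continuous_id.div_const a).max (continuous_id.neg.div_const b)
  · intro t ht; rw [hsupa]; exact hpos t ht
  · intro t ht; rw [hsupb]; exact hneg t ht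
  · rw [hcmax]
    have h1 : ConvexOn ℝ (Set.univ : Set ℝ) (fun t => t / a) := by
      refine ⟨convex_univ, ?_⟩
      intro x _ y _ p r hp hr hpr
      simp only [smul_eq_mul]
      rw [add_div, mul_div_assoc, mul_div_assoc]
    have h2 : ConvexOn ℝ (Set.univ : Set ℝ) (fun t => -t / b) := by
      refine ⟨convex_univ, ?_⟩
      intro x _ y _ p r hp hr hpr
      simp only [smul_eq_mul]
      rw [neg_add, neg_mul_eq_mul_neg, neg_mul_eq_mul_neg, add_div, mul_div_assoc, mul_div_assoc]
    exact h1.sup h2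
  · intro t
    constructor
    · intro h
      rcases le_total 0 t with ht | ht
      · have h1 := hpos t ht; rw [h] at h1
        have h2 : t = 0 * a := (div_eq_iff ha_pos.ne').mp h1.symm
        linarith
      · have h1 := hneg t ht; rw [h] at h1
        have h2 : -t = 0 * b := (div_eq_iff hb_pos.ne').mp h1.symm
        linarith
    · intro h; rw [h]; exact hc00
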